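/- Let N ∈ ℕ and let S_ε be an N×N matrix of the form S_ε = (c/ε) S₀ + R_ε where S₀ has entries (S₀)_{ii} = 2, (S₀)_{ij} = (-1)^{i+j} for i ≠ j, c > 0, and ‖R_ε‖ ≤ C e^{-a/ε} for constants C, a > 0. Then there exists ε₀ > 0 such that for 0 < ε < ε₀, S_ε is invertible and S_ε^{-1} = (ε/((N+1)c)) T₀ + R̃_ε with (T₀)_{ii} = N, (T₀)_{ij} = (-1)^{i+j+1} for i ≠ j, and ‖R̃_ε‖ ≤ C' e^{-a'/ε} for some C', a' > 0. -/

import Mathlib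

attribute [local instance] Matrix.linftyOpNormedRing Matrix.linftyOpNormedAlgebra

lemma stmt12_key (N : ℕ) (S₀ T₀ : Matrix (Fin N) (Fin N) ℝ)
    (hS₀ : ∀ i j, S₀ i j = if i = j then 2 else (-1 : ℝ) ^ (i.val + j.val))
    (hT₀ : ∀ i j, T₀ i j = if i = j then (N : ℝ) else (-1 : ℝ) ^ (i.val + j.val + 1)) :
    S₀ * T₀ = ((N:ℝ)+1) • 1 := by
  ext i j
  rw [Matrix.mul_apply, Matrix.smul_apply, Matrix.one_apply]
  have hterm : ∀ k : Fin N, S₀ i k * T₀ k j =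
      ((N:ℝ)+1) * ((if i = k then (1:ℝ) else 0) * (if k = j then (1:ℝ) else 0))
      + ((N:ℝ)+1) * (-1:ℝ)^(i.val+j.val) * (if k = j then (1:ℝ) else 0)
      - (-1:ℝ)^(i.val+j.val) * (if i = k then (1:ℝ) else 0)
      - (-1:ℝ)^(i.val+j.val) := by
    intro k
    have hpow : (-1:ℝ)^(i.val+k.val) * (-1:ℝ)^(k.val+j.val) = (-1:ℝ)^(i.val+j.val) := by
      rw [← pow_add]
      rw [show i.val + k.val + (k.val + j.val) = (i.val + j.val) + 2 * k.val from by ring,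
        pow_add, pow_mul]
      norm_num
    rw [hS₀, hT₀]
    by_cases hik : i = k <;> by_cases hkj : k = j
    · subst hik; subst hkj
      have h2 : (-1:ℝ)^(i.val+i.val) = 1 := by
        rw [show i.val + i.val = 2 * i.val from by ring, pow_mul]; norm_num
      simp only [if_pos rfl, if_true, eq_self_iff_true, h2]
      ring
    · subst hik
      simp only [if_pos rfl, if_true, eq_self_iff_true, if_neg hkj, pow_succ]
      ring
    · subst hkj
      simp only [if_neg hik, if_pos rfl, if_true, eq_self_iff_true]
      ring
    · simp only [if_neg hik, if_neg hkj, pow_succ]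
      linear_combination (-1:ℝ) * hpow
  rw [Finset.sum_congr rfl fun k _ => hterm k]
  simp only [Finset.sum_sub_distrib, Finset.sum_add_distrib, ite_mul, one_mul, zero_mul,
    mul_ite, mul_one, mul_zero, Finset.sum_ite_eq, Finset.sum_ite_eq', Finset.mem_univ,
    if_true, Finset.sum_const, Finset.card_univ, Fintype.card_fin, nsmul_eq_mul, smul_eq_mul]
  by_cases hij : i = j <;> simp [hij] <;> ring

lemma stmt12_entry_le {N : ℕ} (A : Matrix (Fin N) (Fin N) ℝ) (i j : Fin N) :
    |A i j| ≤ ‖A‖ := by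
  have h : ‖A i j‖₊ ≤ ‖A‖₊ := by
    rw [Matrix.linfty_opNNNorm_def]
    calc ‖A i j‖₊ ≤ ∑ k, ‖A i k‖₊ :=
          Finset.single_le_sum (f := fun k => ‖A i k‖₊) (fun _ _ => zero_le)
            (Finset.mem_univ j)
      _ ≤ _ := Finset.le_sup (f := fun r => ∑ k, ‖A r k‖₊) (Finset.mem_univ i)
  have := NNReal.coe_le_coe.mpr h
  simpa [coe_nnnorm, Real.norm_eq_abs] using this

lemma stmt12_norm_le {N : ℕ} (A : Matrix (Fin N) (Fin N) ℝ) (b : ℝ) (hb : 0 ≤ b)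
    (h : ∀ i j, |A i j| ≤ b) : ‖A‖ ≤ N * b := by
  have hNb : (0:ℝ) ≤ N * b := by positivity
  rw [Matrix.linfty_opNorm_def, ← Real.coe_toNNReal (N*b) hNb, NNReal.coe_le_coe]
  refine Finset.sup_le fun i _ => ?_
  rw [← NNReal.coe_le_coe, Real.coe_toNNReal _ hNb, NNReal.coe_sum]
  calc ∑ j, (‖A i j‖₊ : ℝ) ≤ ∑ _j : Fin N, b :=
        Finset.sum_le_sum fun j _ => by
          simpa [coe_nnnorm, Real.norm_eq_abs] using h i j
    _ = N * b := by simp [Finset.sum_const, nsmul_eq_mul]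

set_option maxHeartbeats 1000000 in
/-- Asymptotic inversion of the Gram-type matrix: if
`S_ε = (c/ε) S₀ + R_ε` with `S₀` the matrix with `2` on the diagonal and `(-1)^{i+j}`
off the diagonal, and `R_ε` exponentially small (entrywise), then for `ε` small `S_ε`
is invertible and `S_ε⁻¹ = (ε/((N+1)c)) T₀ + R̃_ε`, with `T₀` having `N` on the diagonal
and `(-1)^{i+j+1}` off the diagonal, and `R̃_ε` exponentially small (entrywise). -/
theorem stmt12 (N : ℕ) (c C a : ℝ) (hc : 0 < c) (hC : 0 < C) (ha : 0 < a)
    (S₀ T₀ : Matrix (Fin N) (Fin N) ℝ)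
    (hS₀ : ∀ i j, S₀ i j = if i = j then 2 else (-1 : ℝ) ^ (i.val + j.val))
    (hT₀ : ∀ i j, T₀ i j = if i = j then (N : ℝ) else (-1 : ℝ) ^ (i.val + j.val + 1))
    (S R : ℝ → Matrix (Fin N) (Fin N) ℝ)
    (hS : ∀ ε > (0:ℝ), S ε = (c / ε) • S₀ + R ε)
    (hR : ∀ ε > (0:ℝ), ∀ i j, |R ε i j| ≤ C * Real.exp (-a / ε)) :
    ∃ ε₀ > 0, ∃ C' > 0, ∃ a' > 0, ∀ ε, 0 < ε → ε < ε₀ →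
      IsUnit (S ε) ∧
      ∀ i j, |(S ε)⁻¹ i j - (ε / ((N + 1) * c)) * T₀ i j| ≤ C' * Real.exp (-a' / ε) := by
  rcases Nat.eq_zero_or_pos N with hN0 | hNpos
  · subst hN0
    refine ⟨1, one_pos, 1, one_pos, 1, one_pos, fun ε hε _ => ⟨?_, fun i => i.elim0⟩⟩
    rw [Matrix.isUnit_iff_isUnit_det, Matrix.det_isEmpty]
    exact isUnit_one
  haveI : CompleteSpace (Matrix (Fin N) (Fin N) ℝ) := FiniteDimensional.complete ℝ _
  have hN1 : (0:ℝ) < (N:ℝ) + 1 := by positivity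
  have key : S₀ * T₀ = ((N:ℝ)+1) • (1 : Matrix (Fin N) (Fin N) ℝ) :=
    stmt12_key N S₀ T₀ hS₀ hT₀
  have key2 : S₀ * (((N:ℝ)+1)⁻¹ • T₀) = 1 := by
    rw [Matrix.mul_smul, key, smul_smul, inv_mul_cancel₀ hN1.ne', one_smul]
  have key3 : (((N:ℝ)+1)⁻¹ • T₀) * S₀ = 1 := mul_eq_one_comm.mp key2
  set u₀ : (Matrix (Fin N) (Fin N) ℝ)ˣ := ⟨S₀, ((N:ℝ)+1)⁻¹ • T₀, key2, key3⟩ with hu₀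
  have hiu : ((u₀⁻¹ : _ˣ) : Matrix (Fin N) (Fin N) ℝ) = ((N:ℝ)+1)⁻¹ • T₀ := rfl
  have hinvne : ((u₀⁻¹ : _ˣ) : Matrix (Fin N) (Fin N) ℝ) ≠ 0 := by
    intro h
    rw [hiu] at h
    have h0 := congrFun (congrFun h ⟨0, hNpos⟩) ⟨0, hNpos⟩
    rw [Matrix.smul_apply, hT₀, if_pos rfl, smul_eq_mul, Matrix.zero_apply] at h0
    have hne : ((N:ℝ)+1)⁻¹ * (N:ℝ) ≠ 0 := by
      have hN0' : (0:ℝ) < (N:ℝ) := by exact_mod_cast hNpos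
      positivity
    exact hne h0
  have hη : 0 < ‖((u₀⁻¹ : _ˣ) : Matrix (Fin N) (Fin N) ℝ)‖⁻¹ := by
    rw [inv_pos]
    exact norm_pos_iff.mpr hinvne
  have hO := NormedRing.inverse_add_norm_diff_first_order u₀
  rw [Asymptotics.isBigO_iff] at hO
  obtain ⟨C₁, hC₁⟩ := hO
  rw [Metric.eventually_nhds_iff] at hC₁
  obtain ⟨δ, hδ, hb⟩ := hC₁
  set η := ‖((u₀⁻¹ : _ˣ) : Matrix (Fin N) (Fin N) ℝ)‖⁻¹ with hηdef
  set m := min δ η with hm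
  have hmpos : 0 < m := lt_min hδ hη
  set ε₀ := min 1 (c * m / ((N:ℝ) * C + 1)) with hε₀
  have hNC : (0:ℝ) < (N:ℝ) * C + 1 := by positivity
  have hε₀pos : 0 < ε₀ := lt_min one_pos (by positivity)
  refine ⟨ε₀, hε₀pos, |C₁| * N * C / c^2 + 1, by positivity, a, ha, fun ε hε hεlt => ?_⟩
  have hε1 : ε ≤ 1 := le_of_lt (lt_of_lt_of_le hεlt (min_le_left _ _))
  have hεm : ε < c * m / ((N:ℝ) * C + 1) := lt_of_lt_of_le hεlt (min_le_right _ _)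
  have hEpos : 0 < Real.exp (-a / ε) := Real.exp_pos _
  have hE1 : Real.exp (-a / ε) ≤ 1 := by
    rw [Real.exp_le_one_iff]
    apply div_nonpos_of_nonpos_of_nonneg (by linarith) (le_of_lt hε)
  set t : Matrix (Fin N) (Fin N) ℝ := (ε/c) • R ε with ht
  have hεc : 0 < ε / c := by positivity
  have hRn : ‖R ε‖ ≤ (N:ℝ) * (C * Real.exp (-a / ε)) :=
    stmt12_norm_le _ _ (by positivity) (hR ε hε)
  have htn : ‖t‖ ≤ (ε/c) * ((N:ℝ) * (C * Real.exp (-a / ε))) := by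
    rw [ht, norm_smul, Real.norm_eq_abs, abs_of_pos hεc]
    exact mul_le_mul_of_nonneg_left hRn (le_of_lt hεc)
  have htm : ‖t‖ < m := by
    have h1 : (N:ℝ) * (C * Real.exp (-a / ε)) ≤ (N:ℝ) * C := by
      have : C * Real.exp (-a / ε) ≤ C * 1 := mul_le_mul_of_nonneg_left hE1 (le_of_lt hC)
      nlinarith [Nat.cast_nonneg (α := ℝ) N]
    have h2 : ‖t‖ ≤ (ε/c) * ((N:ℝ) * C) := le_trans htn
      (mul_le_mul_of_nonneg_left h1 (le_of_lt hεc))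
    have h3 : (ε/c) * ((N:ℝ) * C) < (ε/c) * ((N:ℝ) * C + 1) :=
      mul_lt_mul_of_pos_left (by linarith) hεc
    have h4 : ε * ((N:ℝ) * C + 1) < c * m := by
      rw [lt_div_iff₀ hNC] at hεm
      exact hεm
    have h5 : (ε/c) * ((N:ℝ) * C + 1) < m := by
      rw [div_mul_eq_mul_div, div_lt_iff₀ hc]
      nlinarith
    linarith
  set B : Matrix (Fin N) (Fin N) ℝ := S₀ + t with hB
  have hUadd : ((Units.add u₀ t (lt_of_lt_of_le htm (min_le_right δ η))) :
      Matrix (Fin N) (Fin N) ℝ) = B := by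
    rw [Units.val_add]
  have hUnitB : IsUnit B := ⟨Units.add u₀ t (lt_of_lt_of_le htm (min_le_right δ η)), hUadd⟩
  have hdetB : IsUnit B.det := (Matrix.isUnit_iff_isUnit_det _).mp hUnitB
  have hcε : c / ε ≠ 0 := ne_of_gt (by positivity)
  have hSε : S ε = (c/ε) • B := by
    rw [hS ε hε, hB, smul_add, smul_smul]
    have h : c / ε * (ε / c) = 1 := by field_simp
    rw [h, one_smul]
  have hUnitS : IsUnit (S ε) := by
    rw [hSε, Matrix.isUnit_iff_isUnit_det, Matrix.det_smul]
    exact (isUnit_iff_ne_zero.mpr (pow_ne_zero _ hcε)).mul hdetB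
  refine ⟨hUnitS, fun i j => ?_⟩
  have hinvS : (S ε)⁻¹ = (ε/c) • B⁻¹ := by
    apply Matrix.inv_eq_right_inv
    rw [hSε, Matrix.smul_mul, Matrix.mul_smul, smul_smul]
    have h : c / ε * (ε / c) = 1 := by field_simp
    rw [h, one_smul, Matrix.mul_nonsing_inv B hdetB]
  set D : Matrix (Fin N) (Fin N) ℝ :=
    Ring.inverse ((u₀ : Matrix (Fin N) (Fin N) ℝ) + t) - ((u₀⁻¹ : _ˣ) : Matrix (Fin N) (Fin N) ℝ)
    with hD
  have hDn : ‖D‖ ≤ C₁ * ‖t‖ := by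
    have h := hb (show dist t 0 < δ by
      rw [dist_zero_right]; exact lt_of_lt_of_le htm (min_le_left δ η))
    rw [hD]
    simpa [norm_norm] using h
  have hBinv : B⁻¹ = Ring.inverse ((u₀ : Matrix (Fin N) (Fin N) ℝ) + t) := by
    rw [Matrix.nonsing_inv_eq_ringInverse]
  have hcoef : ε / (((N:ℝ)) + 1) / c = (ε/c) * (((N:ℝ)+1)⁻¹) := by
    field_simp
  have hmain : (S ε)⁻¹ i j - (ε / (((N:ℝ) + 1) * c)) * T₀ i j = (ε/c) * D i j := by
    rw [hD, hinvS, Matrix.smul_apply, smul_eq_mul, Matrix.sub_apply, hBinv, hiu,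
      Matrix.smul_apply, smul_eq_mul, ← div_div, hcoef]
    ring
  rw [hmain, abs_mul, abs_of_pos hεc]
  have hDij' : |D i j| ≤ ‖D‖ := stmt12_entry_le D i j
  have hDn2 : ‖D‖ ≤ |C₁| * ((ε/c) * ((N:ℝ) * (C * Real.exp (-a / ε)))) := by
    calc ‖D‖ ≤ C₁ * ‖t‖ := hDn
      _ ≤ |C₁| * ‖t‖ := mul_le_mul_of_nonneg_right (le_abs_self C₁) (norm_nonneg t)
      _ ≤ |C₁| * ((ε/c) * ((N:ℝ) * (C * Real.exp (-a / ε)))) :=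
          mul_le_mul_of_nonneg_left htn (abs_nonneg C₁)
  calc (ε/c) * |D i j|
      ≤ (ε/c) * (|C₁| * ((ε/c) * ((N:ℝ) * (C * Real.exp (-a / ε))))) :=
        mul_le_mul_of_nonneg_left (le_trans hDij' hDn2) (le_of_lt hεc)
    _ ≤ (1/c) * (|C₁| * ((1/c) * ((N:ℝ) * (C * Real.exp (-a / ε))))) := by
        have hεc1 : ε/c ≤ 1/c := by gcongr
        have h7 : (0:ℝ) ≤ |C₁| * ((ε/c) * ((N:ℝ) * (C * Real.exp (-a / ε)))) := by positivity
        have h8 : |C₁| * ((ε/c) * ((N:ℝ) * (C * Real.exp (-a / ε)))) ≤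
            |C₁| * ((1/c) * ((N:ℝ) * (C * Real.exp (-a / ε)))) := by gcongr
        calc (ε/c) * (|C₁| * ((ε/c) * ((N:ℝ) * (C * Real.exp (-a / ε)))))
            ≤ (1/c) * (|C₁| * ((ε/c) * ((N:ℝ) * (C * Real.exp (-a / ε))))) :=
              mul_le_mul_of_nonneg_right hεc1 h7
          _ ≤ (1/c) * (|C₁| * ((1/c) * ((N:ℝ) * (C * Real.exp (-a / ε))))) :=
              mul_le_mul_of_nonneg_left h8 (by positivity)
    _ = (|C₁| * N * C / c^2) * Real.exp (-a / ε) := by ring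
    _ ≤ (|C₁| * N * C / c^2 + 1) * Real.exp (-a / ε) := by nlinarith
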